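/- As bivariate formal power series, 1/(1 − x·c(x) − t·x·c(t·x)) = Σ_{n≥0} ((1 − t^{n+1})/(1 − t)) C_n x^n = Σ_{n≥0} C_n (Σ_{k=0}^n t^k) x^n, where c is the Catalan generating function. -/

import Mathlib

open PowerSeries

/-- c(x) = Σ C_n xⁿ, viewed in ℤ[[t]][[x]] (outer variable x, inner variable t). -/
noncomputable def cx : PowerSeries (PowerSeries ℤ) :=
  PowerSeries.mk fun n => ((catalan n : ℤ) : PowerSeries ℤ)

/-- c(tx) = Σ C_n tⁿ xⁿ in ℤ[[t]][[x]]. -/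
noncomputable def ctx : PowerSeries (PowerSeries ℤ) :=
  PowerSeries.mk fun n => ((catalan n : ℤ) : PowerSeries ℤ) * PowerSeries.X ^ n

/-- The variable t, as a constant (in x) power series. -/
noncomputable def tvar : PowerSeries (PowerSeries ℤ) :=
  PowerSeries.C PowerSeries.X

/-- 1/(1 − x·c(x) − t·x·c(tx)) = Σ_n C_n (Σ_{k=0}^n tᵏ) xⁿ
  (= Σ_n ((1−t^{n+1})/(1−t)) C_n xⁿ). -/
lemma hcx : cx = 1 + PowerSeries.X * cx ^ 2 := by
  apply PowerSeries.ext; intro n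
  cases n with
  | zero => simp [cx]
  | succ n =>
    rw [map_add, coeff_one, if_neg (Nat.succ_ne_zero n), zero_add, sq, coeff_succ_X_mul,
      coeff_mul]
    simp only [cx, coeff_mk, catalan_succ' n]
    push_cast
    rfl

lemma hctx : ctx = 1 + tvar * PowerSeries.X * ctx ^ 2 := by
  apply PowerSeries.ext; intro n
  cases n with
  | zero => simp [ctx, tvar]
  | succ n =>
    rw [mul_assoc, map_add, coeff_one, if_neg (Nat.succ_ne_zero n), zero_add, tvar,
      coeff_C_mul, sq, coeff_succ_X_mul, coeff_mul]
    simp only [ctx, coeff_mk, catalan_succ' n]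
    push_cast
    rw [Finset.sum_mul, Finset.mul_sum]
    apply Finset.sum_congr rfl
    intro ij hij
    rw [Finset.HasAntidiagonal.mem_antidiagonal] at hij
    rw [← hij]
    ring

lemma geom (n : ℕ) : (1 - PowerSeries.X) *
        (∑ k ∈ Finset.range (n + 1), (PowerSeries.X : PowerSeries ℤ) ^ k) =
      1 - PowerSeries.X ^ (n + 1) := by
  linear_combination -geom_sum_mul (PowerSeries.X : PowerSeries ℤ) (n + 1)

lemma hS : PowerSeries.C (R := PowerSeries ℤ) (1 - PowerSeries.X) *
      (PowerSeries.mk fun n =>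
        ((catalan n : ℤ) : PowerSeries ℤ) *
          ∑ k ∈ Finset.range (n + 1), PowerSeries.X ^ k) = cx - tvar * ctx := by
  apply PowerSeries.ext; intro n
  rw [coeff_C_mul, coeff_mk, mul_left_comm, geom n]
  simp only [map_sub, cx, ctx, tvar, coeff_C_mul, coeff_mk]
  ring

theorem bivariate_gf_identity :
    (1 - PowerSeries.X * cx - tvar * PowerSeries.X * ctx) *
      (PowerSeries.mk fun n =>
        ((catalan n : ℤ) : PowerSeries ℤ) *
          ∑ k ∈ Finset.range (n + 1), PowerSeries.X ^ k) = 1 ∧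
    ∀ n : ℕ, (1 - PowerSeries.X) *
        (∑ k ∈ Finset.range (n + 1), (PowerSeries.X : PowerSeries ℤ) ^ k) =
      1 - PowerSeries.X ^ (n + 1) := by
  constructor
  · have h1 : cx - PowerSeries.X * cx ^ 2 = 1 := by nth_rewrite 1 [hcx]; ring
    have h2 : ctx - tvar * PowerSeries.X * ctx ^ 2 = 1 := by nth_rewrite 1 [hctx]; ring
    have key : (1 - PowerSeries.X * cx - tvar * PowerSeries.X * ctx) * (cx - tvar * ctx)
        = 1 - tvar := by linear_combination h1 - tvar * h2
    have hCt : PowerSeries.C (R := PowerSeries ℤ) (1 - PowerSeries.X) = 1 - tvar := by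
      simp [tvar]
    have hC0 : PowerSeries.C (R := PowerSeries ℤ) (1 - PowerSeries.X) ≠ 0 := by
      intro h
      have h2 := congrArg (PowerSeries.coeff (R := PowerSeries ℤ) 0) h
      simp at h2
      have h3 := congrArg (PowerSeries.coeff (R := ℤ) 1) h2
      simp at h3
    apply mul_left_cancel₀ hC0
    linear_combination (1 - PowerSeries.X * cx - tvar * PowerSeries.X * ctx) * hS + key - hCt
  · exact geom
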